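/- Let A be a 2n×2n matrix over a commutative ring, x an invertible element, and X, Y ⊆ {1,...,2n} disjoint subsets. Define Ã by Ã_{i,j} = A_{i,j} · x^{1_{i∈X} + 1_{j∈Y} − 1_{i∈Y} − 1_{j∈X}}. Then Σ_R (−1)^{n + ΣR} x^{2(|R∩X| − |R∩Y|)} det A_R^S = x^{|X|−|Y|} pf(Ã − Ãᵗ), where the sum is over all size-n subsets R ⊆ {1,...,2n}, S = {1,...,2n}\R, both ordered increasingly, A_R^S is the submatrix with rows indexed by R and columns by S, ΣR is the sum of elements of R, and pf denotes the Pfaffian. -/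

import Mathlib

open Matrix
/-- The Pfaffian of a `2n × 2n` real matrix, via the averaged permutation formula
`pf M = (1/(2ⁿ n!)) ∑_σ sgn(σ) ∏_{i=1}^{n} M_{σ(2i−1), σ(2i)}`. -/
noncomputable def pfaffian {n : ℕ} (M : Matrix (Fin (2 * n)) (Fin (2 * n)) ℝ) : ℝ :=
  (1 / ((2 : ℝ) ^ n * n.factorial)) *
    ∑ σ : Equiv.Perm (Fin (2 * n)), ((Equiv.Perm.sign σ : ℤ) : ℝ) *
      ∏ i : Fin n,
        M (σ ⟨2 * (i : ℕ), by have := i.isLt; omega⟩)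
          (σ ⟨2 * (i : ℕ) + 1, by have := i.isLt; omega⟩)

open Matrix Equiv Finset


namespace Stmt10Aux

def ee {n : ℕ} (i : Fin n) : Fin (2 * n) := ⟨2 * (i : ℕ), by have := i.isLt; omega⟩
def oo {n : ℕ} (i : Fin n) : Fin (2 * n) := ⟨2 * (i : ℕ) + 1, by have := i.isLt; omega⟩

/-- pairing equiv -/
def QQ (n : ℕ) : (Fin n ⊕ Fin n) ≃ Fin (2 * n) where
  toFun := Sum.elim ee oo
  invFun j := if (j : ℕ) % 2 = 0 then Sum.inl ⟨(j : ℕ) / 2, by have := j.isLt; omega⟩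
    else Sum.inr ⟨(j : ℕ) / 2, by have := j.isLt; omega⟩
  left_inv := by
    rintro (i | i) <;> simp only [Sum.elim_inl, Sum.elim_inr, ee, oo]
    · exact (if_pos (show 2 * (i : ℕ) % 2 = 0 by omega)).trans
        (congrArg Sum.inl (Fin.ext (by show 2 * (i : ℕ) / 2 = i; omega)))
    · exact (if_neg (show ¬ (2 * (i : ℕ) + 1) % 2 = 0 by omega)).trans
        (congrArg Sum.inr (Fin.ext (by show (2 * (i : ℕ) + 1) / 2 = i; omega)))
  right_inv := by
    intro j
    by_cases h : (j : ℕ) % 2 = 0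
    · show Sum.elim ee oo (if (j : ℕ) % 2 = 0 then _ else _) = j
      rw [if_pos h]; exact Fin.ext (by simp [ee]; omega)
    · show Sum.elim ee oo (if (j : ℕ) % 2 = 0 then _ else _) = j
      rw [if_neg h]; exact Fin.ext (by simp [oo]; omega)

@[simp] lemma QQ_symm_ee {n : ℕ} (i : Fin n) : (QQ n).symm (ee i) = Sum.inl i :=
  (QQ n).symm_apply_eq.2 rfl

@[simp] lemma QQ_symm_oo {n : ℕ} (i : Fin n) : (QQ n).symm (oo i) = Sum.inr i :=
  (QQ n).symm_apply_eq.2 rfl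


variable {n : ℕ}

lemma exists_ee_or_oo (p : Fin (2 * n)) : (∃ i, p = ee i) ∨ (∃ i, p = oo i) := by
  by_cases h : (p : ℕ) % 2 = 0
  · exact Or.inl ⟨⟨(p : ℕ) / 2, by have := p.isLt; omega⟩, Fin.ext (by simp [ee]; omega)⟩
  · exact Or.inr ⟨⟨(p : ℕ) / 2, by have := p.isLt; omega⟩, Fin.ext (by simp [oo]; omega)⟩

lemma compl_card {R : Finset (Fin (2 * n))} (hR : R.card = n) : Rᶜ.card = n := by
  rw [Finset.card_compl, hR, Fintype.card_fin]; omega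

/-- the row map: increasing enumeration of `R` -/
def aMap (R : Finset (Fin (2 * n))) (hR : R.card = n) : Fin n → Fin (2 * n) :=
  fun i => (R.orderIsoOfFin hR i : Fin (2 * n))

/-- the column map: increasing enumeration of `Rᶜ` -/
def bMap (R : Finset (Fin (2 * n))) (hR : R.card = n) : Fin n → Fin (2 * n) :=
  fun i => ((Rᶜ).orderIsoOfFin (compl_card hR) i : Fin (2 * n))

variable {R : Finset (Fin (2 * n))} (hR : R.card = n)

lemma aMap_mem (i : Fin n) : aMap R hR i ∈ R := (R.orderIsoOfFin hR i).2
lemma bMap_mem (i : Fin n) : bMap R hR i ∈ Rᶜ := ((Rᶜ).orderIsoOfFin (compl_card hR) i).2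

lemma aMap_not_mem_compl (i : Fin n) : aMap R hR i ∉ Rᶜ := by
  simp [Finset.mem_compl, aMap_mem hR i]

lemma aMap_ne_bMap (i j : Fin n) : aMap R hR i ≠ bMap R hR j := by
  intro h
  have := bMap_mem hR j
  rw [← h] at this
  exact aMap_not_mem_compl hR i this

lemma aMap_strictMono : StrictMono (aMap R hR) := fun i j h =>
  Subtype.coe_lt_coe.2 ((R.orderIsoOfFin hR).strictMono h)

lemma bMap_strictMono : StrictMono (bMap R hR) := fun i j h =>
  Subtype.coe_lt_coe.2 (((Rᶜ).orderIsoOfFin (compl_card hR)).strictMono h)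

lemma aMap_surj {r : Fin (2 * n)} (hr : r ∈ R) : ∃ i, aMap R hR i = r :=
  ⟨(R.orderIsoOfFin hR).symm ⟨r, hr⟩, by
    simp [aMap]⟩

lemma bMap_surj {s : Fin (2 * n)} (hs : s ∈ Rᶜ) : ∃ i, bMap R hR i = s :=
  ⟨((Rᶜ).orderIsoOfFin (compl_card hR)).symm ⟨s, hs⟩, by
    simp [bMap]⟩

lemma gg_bijective : Function.Bijective (Sum.elim (aMap R hR) (bMap R hR)) := by
  rw [Fintype.bijective_iff_injective_and_card]
  constructor
  · rintro (i | i) (j | j) h <;> simp only [Sum.elim_inl, Sum.elim_inr] at h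
    · exact congrArg Sum.inl ((aMap_strictMono hR).injective h)
    · exact absurd h (aMap_ne_bMap hR i j)
    · exact absurd h.symm (aMap_ne_bMap hR j i)
    · exact congrArg Sum.inr ((bMap_strictMono hR).injective h)
  · simp [Fintype.card_sum]; omega

/-- enumeration equiv -/
noncomputable def GG (R : Finset (Fin (2 * n))) (hR : R.card = n) :
    (Fin n ⊕ Fin n) ≃ Fin (2 * n) :=
  Equiv.ofBijective _ (gg_bijective hR)

/-- the canonical interleaving permutation of `R` -/
noncomputable def sigmaR (R : Finset (Fin (2 * n))) (hR : R.card = n) :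
    Equiv.Perm (Fin (2 * n)) :=
  (QQ n).symm.trans (GG R hR)

@[simp] lemma GG_inl (i : Fin n) : GG R hR (Sum.inl i) = aMap R hR i := rfl
@[simp] lemma GG_inr (i : Fin n) : GG R hR (Sum.inr i) = bMap R hR i := rfl

@[simp] lemma sigmaR_ee (i : Fin n) : sigmaR R hR (ee i) = aMap R hR i := by
  simp [sigmaR]

@[simp] lemma sigmaR_oo (i : Fin n) : sigmaR R hR (oo i) = bMap R hR i := by
  simp [sigmaR]

lemma neg_one_pow_eq_of_mod_two {a b : ℕ} (h : a % 2 = b % 2) :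
    ((-1 : ℝ)) ^ a = (-1) ^ b := by
  conv_lhs => rw [← Nat.div_add_mod a 2]
  conv_rhs => rw [← Nat.div_add_mod b 2]
  rw [pow_add, pow_add, pow_mul, pow_mul]
  norm_num [h]


lemma sign_eq_signAux {m : ℕ} (f : Equiv.Perm (Fin m)) :
    Equiv.Perm.sign f = Equiv.Perm.signAux f := by
  refine Equiv.Perm.swap_induction_on f ?_ ?_
  · rw [Equiv.Perm.sign_one, Equiv.Perm.signAux_one]
  · intro f x y hxy ih
    rw [Equiv.Perm.sign_mul, Equiv.Perm.signAux_mul, ih, Equiv.Perm.sign_swap hxy,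
      Equiv.Perm.signAux_swap hxy]

/-- number of inversions -/
def invCard {m : ℕ} (f : Equiv.Perm (Fin m)) : ℕ :=
  ((univ : Finset (Fin m × Fin m)).filter fun p => p.2 < p.1 ∧ f p.1 ≤ f p.2).card

lemma sign_eq_inv_pow {m : ℕ} (f : Equiv.Perm (Fin m)) :
    ((Equiv.Perm.sign f : ℤ) : ℝ) = (-1 : ℝ) ^ invCard f := by
  have h1 : Equiv.Perm.sign f
      = (-1 : ℤˣ) ^ ((Equiv.Perm.finPairsLT m).filter fun a => f a.1 ≤ f a.2).card := by
    rw [sign_eq_signAux]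
    unfold Equiv.Perm.signAux
    rw [← Finset.prod_filter_mul_prod_filter_not (Equiv.Perm.finPairsLT m)
      (fun a => f a.1 ≤ f a.2)]
    rw [Finset.prod_congr rfl (fun a ha => if_pos (Finset.mem_filter.1 ha).2),
      Finset.prod_congr rfl (fun a ha => if_neg (Finset.mem_filter.1 ha).2),
      Finset.prod_const, Finset.prod_const, one_pow, mul_one]
  have h2 : ((Equiv.Perm.finPairsLT m).filter fun a => f a.1 ≤ f a.2).card = invCard f := by
    apply Finset.card_bij' (fun a _ => ((a.1, a.2) : Fin m × Fin m))
      (fun p _ => (⟨p.1, p.2⟩ : Σ _ : Fin m, Fin m))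
    · intro a ha
      rw [Finset.mem_filter] at ha
      have := Equiv.Perm.mem_finPairsLT.1 ha.1
      simp [invCard, Finset.mem_filter, this, ha.2]
    · intro p hp
      unfold invCard at hp
      rw [Finset.mem_filter] at hp
      rw [Finset.mem_filter]
      exact ⟨Equiv.Perm.mem_finPairsLT.2 hp.2.1, hp.2.2⟩
    · intro a _; rfl
    · intro p _; rfl
  rw [h1, h2]
  push_cast
  rfl


@[simp] lemma ee_lt_ee {n : ℕ} {i j : Fin n} : ee i < ee j ↔ i < j := by
  simp only [ee, Fin.lt_def]; omega
@[simp] lemma oo_lt_oo {n : ℕ} {i j : Fin n} : oo i < oo j ↔ i < j := by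
  simp only [oo, Fin.lt_def]; omega
@[simp] lemma oo_lt_ee {n : ℕ} {i j : Fin n} : oo j < ee i ↔ j < i := by
  simp only [ee, oo, Fin.lt_def]; omega
@[simp] lemma ee_lt_oo {n : ℕ} {i j : Fin n} : ee j < oo i ↔ j ≤ i := by
  simp only [ee, oo, Fin.lt_def, Fin.le_def]; omega
lemma oo_ne_ee {n : ℕ} {i j : Fin n} : oo i ≠ ee j := by
  simp only [ee, oo, ne_eq, Fin.ext_iff]; omega
lemma ee_inj {n : ℕ} {i j : Fin n} (h : ee i = ee j) : i = j := by
  simp only [ee, Fin.ext_iff] at h ⊢; omega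
lemma oo_inj {n : ℕ} {i j : Fin n} (h : oo i = oo j) : i = j := by
  simp only [oo, Fin.ext_iff] at h ⊢; omega

lemma sum_orderIsoOfFin {γ M : Type*} [LinearOrder γ] [AddCommMonoid M] (T : Finset γ)
    {k : ℕ} (h : T.card = k) (f : γ → M) :
    ∑ i : Fin k, f (T.orderIsoOfFin h i) = ∑ t ∈ T, f t := by
  apply Finset.sum_bij (fun (i : Fin k) _ => (T.orderIsoOfFin h i : γ))
  · intro i _; exact (T.orderIsoOfFin h i).2
  · intro i _ j _ hij
    exact (T.orderIsoOfFin h).injective (Subtype.ext hij)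
  · intro t ht
    exact ⟨(T.orderIsoOfFin h).symm ⟨t, ht⟩, Finset.mem_univ _, by simp⟩
  · intro i _; rfl

lemma prod_orderIsoOfFin {γ M : Type*} [LinearOrder γ] [CommMonoid M] (T : Finset γ)
    {k : ℕ} (h : T.card = k) (f : γ → M) :
    ∏ i : Fin k, f (T.orderIsoOfFin h i) = ∏ t ∈ T, f t := by
  apply Finset.prod_bij (fun (i : Fin k) _ => (T.orderIsoOfFin h i : γ))
  · intro i _; exact (T.orderIsoOfFin h i).2
  · intro i _ j _ hij
    exact (T.orderIsoOfFin h).injective (Subtype.ext hij)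
  · intro t ht
    exact ⟨(T.orderIsoOfFin h).symm ⟨t, ht⟩, Finset.mem_univ _, by simp⟩
  · intro i _; rfl

lemma sign_sigmaR {n : ℕ} {R : Finset (Fin (2 * n))} (hR : R.card = n) :
    ((Equiv.Perm.sign (sigmaR R hR) : ℤ) : ℝ) = (-1 : ℝ) ^ (∑ r ∈ R, (r : ℕ)) := by
  classical
  rw [sign_eq_inv_pow]
  apply neg_one_pow_eq_of_mod_two
  -- notation
  have hab : ∀ i j : Fin n, aMap R hR i ≠ bMap R hR j := aMap_ne_bMap hR
  -- the six auxiliary sets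
  let F' := (univ : Finset (Fin n × Fin n)).filter
    (fun q => q.2 ≤ q.1 ∧ bMap R hR q.1 < aMap R hR q.2)
  let F'' := (univ : Finset (Fin n × Fin n)).filter
    (fun q => q.2 ≤ q.1 ∧ aMap R hR q.2 < bMap R hR q.1)
  let G' := (univ : Finset (Fin n × Fin n)).filter
    (fun q => q.2 < q.1 ∧ aMap R hR q.1 < bMap R hR q.2)
  let G'' := (univ : Finset (Fin n × Fin n)).filter
    (fun q => q.1 < q.2 ∧ aMap R hR q.2 < bMap R hR q.1)
  let W := (univ : Finset (Fin n × Fin n)).filter (fun q => q.2 ≤ q.1)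
  let U := (univ : Finset (Fin n × Fin n)).filter
    (fun q => aMap R hR q.2 < bMap R hR q.1)
  -- Eq 2 : invCard = F' + G'
  have e2 : invCard (sigmaR R hR) = F'.card + G'.card := by
    have key : ((univ : Finset (Fin (2*n) × Fin (2*n))).filter fun p =>
        p.2 < p.1 ∧ sigmaR R hR p.1 ≤ sigmaR R hR p.2)
        = F'.image (fun q => (oo q.1, ee q.2)) ∪ G'.image (fun q => (ee q.1, oo q.2)) := by
      ext ⟨p1, p2⟩
      simp only [Finset.mem_filter, Finset.mem_univ, true_and, Finset.mem_union,
        Finset.mem_image, F', G']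
      constructor
      · rintro ⟨hlt, hle⟩
        rcases exists_ee_or_oo p1 with ⟨i, rfl⟩ | ⟨i, rfl⟩ <;>
          rcases exists_ee_or_oo p2 with ⟨j, rfl⟩ | ⟨j, rfl⟩
        · rw [ee_lt_ee] at hlt
          rw [sigmaR_ee, sigmaR_ee, (aMap_strictMono hR).le_iff_le] at hle
          exact absurd hle (by omega)
        · -- p1 = ee i, p2 = oo j : G' case
          rw [oo_lt_ee] at hlt
          rw [sigmaR_ee, sigmaR_oo] at hle
          exact Or.inr ⟨(i, j), ⟨hlt, lt_of_le_of_ne hle (hab i j)⟩, rfl⟩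
        · -- p1 = oo i, p2 = ee j : F' case
          rw [ee_lt_oo] at hlt
          rw [sigmaR_oo, sigmaR_ee] at hle
          exact Or.inl ⟨(i, j), ⟨hlt, lt_of_le_of_ne hle (hab j i).symm⟩, rfl⟩
        · rw [oo_lt_oo] at hlt
          rw [sigmaR_oo, sigmaR_oo, (bMap_strictMono hR).le_iff_le] at hle
          exact absurd hle (by omega)
      · rintro (⟨q, ⟨hq1, hq2⟩, heq⟩ | ⟨q, ⟨hq1, hq2⟩, heq⟩) <;>
          injection heq with h1 h2 <;> subst h1 <;> subst h2
        · rw [ee_lt_oo, sigmaR_oo, sigmaR_ee]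
          exact ⟨hq1, le_of_lt hq2⟩
        · rw [oo_lt_ee, sigmaR_ee, sigmaR_oo]
          exact ⟨hq1, le_of_lt hq2⟩
    have hdisj : Disjoint (F'.image (fun q => (oo q.1, ee q.2)))
        (G'.image (fun q => (ee q.1, oo q.2))) := by
      rw [Finset.disjoint_left]
      rintro a ha hb
      rw [Finset.mem_image] at ha hb
      obtain ⟨q, _, hq⟩ := ha
      obtain ⟨r, _, hr⟩ := hb
      rw [← hr, Prod.ext_iff] at hq
      exact oo_ne_ee hq.1
    have hinj1 : Function.Injective (fun q : Fin n × Fin n => (oo q.1, ee q.2)) := by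
      rintro ⟨a, b⟩ ⟨c, d⟩ h
      rw [Prod.ext_iff] at h
      exact Prod.ext_iff.2 ⟨oo_inj h.1, ee_inj h.2⟩
    have hinj2 : Function.Injective (fun q : Fin n × Fin n => (ee q.1, oo q.2)) := by
      rintro ⟨a, b⟩ ⟨c, d⟩ h
      rw [Prod.ext_iff] at h
      exact Prod.ext_iff.2 ⟨ee_inj h.1, oo_inj h.2⟩
    unfold invCard
    rw [key, Finset.card_union_of_disjoint hdisj, Finset.card_image_of_injective _ hinj1,
      Finset.card_image_of_injective _ hinj2]
  -- Eq 3 : F' + F'' = W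
  have e3 : F'.card + F''.card = W.card := by
    rw [← Finset.card_filter_add_card_filter_not
      (s := W) (p := fun q => bMap R hR q.1 < aMap R hR q.2)]
    congr 1
    · congr 1
      rw [Finset.filter_filter]
    · congr 1
      rw [Finset.filter_filter]
      apply Finset.filter_congr
      intro q _
      simp only [not_lt]
      constructor
      · rintro ⟨h1, h2⟩; exact ⟨h1, le_of_lt h2⟩
      · rintro ⟨h1, h2⟩; exact ⟨h1, lt_of_le_of_ne h2 (hab q.2 q.1)⟩
  -- Eq 4 : G' = G''
  have e4 : G'.card = G''.card := by
    apply Finset.card_bij (fun q _ => (q.2, q.1))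
    · rintro ⟨a, b⟩ hq
      simp only [G', G'', Finset.mem_filter, Finset.mem_univ, true_and] at hq ⊢
      exact hq
    · rintro ⟨a, b⟩ _ ⟨c, d⟩ _ h
      rw [Prod.ext_iff] at h
      exact Prod.ext_iff.2 ⟨h.2, h.1⟩
    · rintro ⟨a, b⟩ hq
      refine ⟨(b, a), ?_, rfl⟩
      simp only [G', G'', Finset.mem_filter, Finset.mem_univ, true_and] at hq ⊢
      exact hq
  -- Eq 5 : G'' + F'' = U
  have e5 : F''.card + G''.card = U.card := by
    rw [← Finset.card_filter_add_card_filter_not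
      (s := U) (p := fun q => q.2 ≤ q.1)]
    congr 1
    · congr 1
      rw [Finset.filter_filter]
      apply Finset.filter_congr
      intro q _
      exact ⟨fun ⟨h1, h2⟩ => ⟨h2, h1⟩, fun ⟨h1, h2⟩ => ⟨h2, h1⟩⟩
    · congr 1
      rw [Finset.filter_filter]
      apply Finset.filter_congr
      intro q _
      simp only [not_le]
      exact ⟨fun ⟨h1, h2⟩ => ⟨h2, h1⟩, fun ⟨h1, h2⟩ => ⟨h2, h1⟩⟩
  -- Eq 6 : W = Σ i + n
  have e6 : W.card = (∑ i : Fin n, (i : ℕ)) + n := by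
    have h1 : W.card = ∑ i : Fin n, (W.filter fun q => q.1 = i).card :=
      Finset.card_eq_sum_card_fiberwise (fun q _ => Finset.mem_univ q.1)
    have h2 : ∀ i : Fin n, (W.filter fun q => q.1 = i).card = (i : ℕ) + 1 := by
      intro i
      have : (W.filter fun q => q.1 = i).card = (Finset.Iic i).card := by
        apply Finset.card_bij (fun q _ => q.2)
        · rintro ⟨a, b⟩ hq
          simp only [W, Finset.mem_filter, Finset.mem_univ, true_and] at hq
          rw [Finset.mem_Iic]
          rw [← hq.2]; exact hq.1
        · rintro ⟨a, b⟩ ha ⟨c, d⟩ hc h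
          simp only [W, Finset.mem_filter] at ha hc
          cases h
          rw [Prod.ext_iff]
          exact ⟨ha.2.trans hc.2.symm, rfl⟩
        · intro j hj
          rw [Finset.mem_Iic] at hj
          exact ⟨(i, j), by simp [W, hj], rfl⟩
      rw [this, Fin.card_Iic]
    rw [h1, Finset.sum_congr rfl (fun i _ => h2 i), Finset.sum_add_distrib,
      Finset.sum_const, Finset.card_univ, Fintype.card_fin, smul_eq_mul, mul_one]
  -- Eq 7 : U + Σ i = Σ_{s ∈ Rᶜ} s
  have e7 : U.card + (∑ i : Fin n, (i : ℕ)) = ∑ s ∈ Rᶜ, (s : ℕ) := by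
    have h1 : U.card = ∑ i : Fin n, (U.filter fun q => q.1 = i).card :=
      Finset.card_eq_sum_card_fiberwise (fun q _ => Finset.mem_univ q.1)
    have h2 : ∀ i : Fin n,
        (U.filter fun q => q.1 = i).card + (i : ℕ) = ((bMap R hR i : Fin (2*n)) : ℕ) := by
      intro i
      have hA : (U.filter fun q => q.1 = i).card
          = ((Finset.Iio (bMap R hR i)).filter (· ∈ R)).card := by
        apply Finset.card_bij (fun q _ => aMap R hR q.2)
        · rintro ⟨a, b⟩ hq
          simp only [U, Finset.mem_filter, Finset.mem_univ, true_and] at hq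
          rw [Finset.mem_filter, Finset.mem_Iio]
          obtain ⟨h1', h2'⟩ := hq
          exact ⟨h2' ▸ h1', aMap_mem hR b⟩
        · rintro ⟨a, b⟩ ha ⟨c, d⟩ hc h
          simp only [U, Finset.mem_filter] at ha hc
          rw [Prod.ext_iff]
          exact ⟨ha.2.trans hc.2.symm, (aMap_strictMono hR).injective h⟩
        · intro r hr
          rw [Finset.mem_filter, Finset.mem_Iio] at hr
          obtain ⟨j, hj⟩ := aMap_surj hR hr.2
          refine ⟨(i, j), ?_, hj⟩
          simp only [U, Finset.mem_filter, Finset.mem_univ, true_and]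
          exact ⟨hj ▸ hr.1, trivial⟩
      have hB : ((Finset.Iio (bMap R hR i)).filter (· ∉ R)).card = (i : ℕ) := by
        have : ((Finset.Iio (bMap R hR i)).filter (· ∉ R)).card = (Finset.Iio i).card := by
          symm
          apply Finset.card_bij (fun j _ => bMap R hR j)
          · intro j hj
            rw [Finset.mem_Iio] at hj
            rw [Finset.mem_filter, Finset.mem_Iio]
            refine ⟨bMap_strictMono hR hj, ?_⟩
            have := bMap_mem hR j
            rw [Finset.mem_compl] at this
            exact this
          · intro a _ b _ h
            exact (bMap_strictMono hR).injective h
          · intro s hs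
            rw [Finset.mem_filter, Finset.mem_Iio] at hs
            obtain ⟨j, hj⟩ := bMap_surj hR (Finset.mem_compl.2 hs.2)
            refine ⟨j, ?_, hj⟩
            rw [Finset.mem_Iio, ← (bMap_strictMono hR).lt_iff_lt]
            rw [hj]; exact hs.1
        rw [this, Fin.card_Iio]
      have hC := Finset.card_filter_add_card_filter_not
        (s := Finset.Iio (bMap R hR i)) (p := (· ∈ R))
      rw [Fin.card_Iio] at hC
      omega
    have h3 : ∑ i : Fin n, ((bMap R hR i : Fin (2*n)) : ℕ) = ∑ s ∈ Rᶜ, (s : ℕ) :=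
      sum_orderIsoOfFin (Rᶜ) (compl_card hR) (fun s => (s : ℕ))
    calc U.card + (∑ i : Fin n, (i : ℕ))
        = ∑ i : Fin n, ((U.filter fun q => q.1 = i).card + (i : ℕ)) := by
          rw [Finset.sum_add_distrib, ← h1]
      _ = ∑ i : Fin n, ((bMap R hR i : Fin (2*n)) : ℕ) :=
          Finset.sum_congr rfl (fun i _ => h2 i)
      _ = ∑ s ∈ Rᶜ, (s : ℕ) := h3
  -- Eq 8
  have e8 : (∑ r ∈ R, (r : ℕ)) + (∑ s ∈ Rᶜ, (s : ℕ)) = ∑ k : Fin (2*n), (k : ℕ) :=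
    Finset.sum_add_sum_compl R _
  -- Gauss sum
  have hM : (∑ k : Fin (2*n), (k : ℕ)) = n * (2*n - 1) := by
    have h2 : (∑ i ∈ Finset.range (2*n), i) * 2 = 2 * (n * (2*n-1)) := by
      rw [Finset.sum_range_id_mul_two]
      generalize (2*n-1) = K
      ring
    rw [Fin.sum_univ_eq_sum_range (fun k => k) (2*n)]
    omega
  have e9 : (∑ k : Fin (2*n), (k : ℕ)) % 2 = n % 2 := by
    rcases Nat.eq_zero_or_pos n with h0 | h0
    · rw [hM, h0]
    · rw [hM, Nat.mul_mod]
      have h1 : (2*n-1) % 2 = 1 := by omega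
      rw [h1]
      omega
  omega



----------------------------------------------------------------
-- buildPerm and its properties
----------------------------------------------------------------

noncomputable def buildPerm {n : ℕ} (R : Finset (Fin (2 * n))) (hR : R.card = n)
    (π ρ : Equiv.Perm (Fin n)) : Equiv.Perm (Fin (2 * n)) :=
  (QQ n).symm.trans ((Equiv.sumCongr π ρ).trans (GG R hR))

@[simp] lemma buildPerm_ee {n : ℕ} {R : Finset (Fin (2 * n))} (hR : R.card = n)
    (π ρ : Equiv.Perm (Fin n)) (i : Fin n) :
    buildPerm R hR π ρ (ee i) = aMap R hR (π i) := by
  simp [buildPerm]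

@[simp] lemma buildPerm_oo {n : ℕ} {R : Finset (Fin (2 * n))} (hR : R.card = n)
    (π ρ : Equiv.Perm (Fin n)) (i : Fin n) :
    buildPerm R hR π ρ (oo i) = bMap R hR (ρ i) := by
  simp [buildPerm]

lemma sign_buildPerm {n : ℕ} {R : Finset (Fin (2 * n))} (hR : R.card = n)
    (π ρ : Equiv.Perm (Fin n)) :
    Equiv.Perm.sign (buildPerm R hR π ρ)
      = Equiv.Perm.sign π * Equiv.Perm.sign ρ * Equiv.Perm.sign (sigmaR R hR) := by
  have hdec : buildPerm R hR π ρ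
      = ((QQ n).symm.trans ((Equiv.sumCongr π ρ).trans (QQ n))).trans (sigmaR R hR) := by
    ext z
    simp [buildPerm, sigmaR, Equiv.trans_apply]
  rw [hdec, Equiv.Perm.sign_trans, ← Equiv.trans_assoc,
    Equiv.Perm.sign_symm_trans_trans, Equiv.Perm.sign_sumCongr]
  rw [mul_comm]

lemma mem_iff_buildPerm {n : ℕ} {R : Finset (Fin (2 * n))} (hR : R.card = n)
    (π ρ : Equiv.Perm (Fin n)) (r : Fin (2 * n)) :
    r ∈ R ↔ ∃ i : Fin n, buildPerm R hR π ρ (ee i) = r := by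
  constructor
  · intro hr
    obtain ⟨j, hj⟩ := aMap_surj hR hr
    exact ⟨π.symm j, by simp [hj]⟩
  · rintro ⟨i, rfl⟩
    simp only [buildPerm_ee]
    exact aMap_mem hR (π i)

/-- The global parametrization map. -/
noncomputable def Phi {n : ℕ}
    (t : {x // x ∈ (univ : Finset (Fin (2 * n))).powersetCard n}
      × Equiv.Perm (Fin n) × Equiv.Perm (Fin n)) : Equiv.Perm (Fin (2 * n)) :=
  buildPerm t.1.1 (Finset.mem_powersetCard_univ.mp t.1.2) t.2.1 t.2.2

lemma Phi_bijective {n : ℕ} : Function.Bijective (Phi (n := n)) := by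
  rw [Fintype.bijective_iff_injective_and_card]
  constructor
  · rintro ⟨⟨R, hRmem⟩, π, ρ⟩ ⟨⟨R', hR'mem⟩, π', ρ'⟩ h
    have hR : R.card = n := Finset.mem_powersetCard_univ.mp hRmem
    have hR' : R'.card = n := Finset.mem_powersetCard_univ.mp hR'mem
    have happ : ∀ z, buildPerm R hR π ρ z = buildPerm R' hR' π' ρ' z := by
      intro z
      exact congrArg (fun (s : Equiv.Perm (Fin (2 * n))) => s z) h
    have hRR' : R = R' := by
      ext r
      rw [mem_iff_buildPerm hR π ρ r, mem_iff_buildPerm hR' π' ρ' r]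
      constructor
      · rintro ⟨i, hi⟩; exact ⟨i, (happ (ee i)) ▸ hi⟩
      · rintro ⟨i, hi⟩; exact ⟨i, (happ (ee i)).symm ▸ hi⟩
    subst hRR'
    have hπ : π = π' := by
      apply Equiv.ext
      intro i
      have := happ (ee i)
      rw [buildPerm_ee, buildPerm_ee] at this
      exact (aMap_strictMono hR).injective this
    have hρ : ρ = ρ' := by
      apply Equiv.ext
      intro i
      have := happ (oo i)
      rw [buildPerm_oo, buildPerm_oo] at this
      exact (bMap_strictMono hR).injective this
    subst hπ; subst hρ; rfl
  · simp only [Fintype.card_prod, Fintype.card_coe, Finset.card_powersetCard,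
      Fintype.card_perm, Fintype.card_fin, Finset.card_univ]
    have h := Nat.choose_mul_factorial_mul_factorial (show n ≤ 2 * n by omega)
    rw [show 2 * n - n = n by omega] at h
    rw [← mul_assoc]
    exact h

lemma units_sq_cast (u : ℤˣ) : ((u : ℤ) : ℝ) * ((u : ℤ) : ℝ) = 1 := by
  rcases Int.units_eq_one_or u with h | h <;> rw [h] <;> norm_num

lemma zsmul_cast_real (u : ℤˣ) (x : ℝ) : u • x = ((u : ℤ) : ℝ) * x := by
  rw [Units.smul_def, zsmul_eq_mul]

----------------------------------------------------------------
-- step 2b : the permutation sum as a sum of determinants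
----------------------------------------------------------------

lemma sum_perm {n : ℕ} (B : Matrix (Fin (2 * n)) (Fin (2 * n)) ℝ) :
    ∑ σ : Equiv.Perm (Fin (2 * n)), ((Equiv.Perm.sign σ : ℤ) : ℝ) *
        ∏ i : Fin n, B (σ (ee i)) (σ (oo i))
      = ∑ R ∈ ((univ : Finset (Fin (2 * n))).powersetCard n).attach,
          (n.factorial : ℝ) * ((-1 : ℝ) ^ (∑ r ∈ R.1, (r : ℕ)) *
            (B.submatrix (aMap R.1 (Finset.mem_powersetCard_univ.mp R.2))
              (bMap R.1 (Finset.mem_powersetCard_univ.mp R.2))).det) := by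
  classical
  rw [← Fintype.sum_bijective (Phi (n := n)) Phi_bijective
    (fun t => ((Equiv.Perm.sign (Phi t) : ℤ) : ℝ) *
      ∏ i : Fin n, B (Phi t (ee i)) (Phi t (oo i)))
    (fun σ => ((Equiv.Perm.sign σ : ℤ) : ℝ) * ∏ i : Fin n, B (σ (ee i)) (σ (oo i)))
    (fun t => rfl)]
  rw [Fintype.sum_prod_type, Finset.univ_eq_attach]
  apply Finset.sum_congr rfl
  intro R _
  have hR : R.1.card = n := Finset.mem_powersetCard_univ.mp R.2
  -- per-R computation
  have key : ∀ π : Equiv.Perm (Fin n),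
      (∑ ρ : Equiv.Perm (Fin n),
        ((Equiv.Perm.sign (buildPerm R.1 hR π ρ) : ℤ) : ℝ) *
          ∏ i : Fin n, B (buildPerm R.1 hR π ρ (ee i)) (buildPerm R.1 hR π ρ (oo i)))
      = ((Equiv.Perm.sign (sigmaR R.1 hR) : ℤ) : ℝ) *
          ∑ τ : Equiv.Perm (Fin n), ((Equiv.Perm.sign τ : ℤ) : ℝ) *
            ∏ j : Fin n, B (aMap R.1 hR j) (bMap R.1 hR (τ j)) := by
    intro π
    rw [← Fintype.sum_bijective (fun τ : Equiv.Perm (Fin n) => τ * π)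
      (Group.mulRight_bijective π)
      (fun τ => ((Equiv.Perm.sign (buildPerm R.1 hR π (τ * π)) : ℤ) : ℝ) *
        ∏ i : Fin n, B (buildPerm R.1 hR π (τ * π) (ee i)) (buildPerm R.1 hR π (τ * π) (oo i)))
      (fun ρ => ((Equiv.Perm.sign (buildPerm R.1 hR π ρ) : ℤ) : ℝ) *
        ∏ i : Fin n, B (buildPerm R.1 hR π ρ (ee i)) (buildPerm R.1 hR π ρ (oo i)))
      (fun τ => rfl)]
    rw [Finset.mul_sum]
    apply Finset.sum_congr rfl
    intro τ _
    simp only [buildPerm_ee, buildPerm_oo, sign_buildPerm, Equiv.Perm.sign_mul,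
      Equiv.Perm.mul_apply]
    have hprod : ∏ i : Fin n, B (aMap R.1 hR (π i)) (bMap R.1 hR (τ (π i)))
        = ∏ j : Fin n, B (aMap R.1 hR j) (bMap R.1 hR (τ j)) :=
      Equiv.prod_comp π (fun j => B (aMap R.1 hR j) (bMap R.1 hR (τ j)))
    rw [hprod]
    rcases Int.units_eq_one_or (Equiv.Perm.sign π) with h | h <;> rw [h] <;> push_cast <;> ring
  rw [Fintype.sum_prod_type]
  have hPhi : ∀ (y : Equiv.Perm (Fin n) × Equiv.Perm (Fin n)),
      Phi (R, y) = buildPerm R.1 hR y.1 y.2 := fun _ => rfl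
  simp only [hPhi]
  rw [Finset.sum_congr rfl (fun π _ => key π)]
  rw [Finset.sum_const, Finset.card_univ, Fintype.card_perm, Fintype.card_fin]
  have hdet : ∑ τ : Equiv.Perm (Fin n), ((Equiv.Perm.sign τ : ℤ) : ℝ) *
      ∏ j : Fin n, B (aMap R.1 hR j) (bMap R.1 hR (τ j))
      = (B.submatrix (aMap R.1 hR) (bMap R.1 hR)).det := by
    rw [← Matrix.det_transpose, Matrix.det_apply]
    apply Finset.sum_congr rfl
    intro τ _
    rw [zsmul_cast_real]
    congr 1
  rw [hdet, sign_sigmaR hR, nsmul_eq_mul]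


----------------------------------------------------------------
-- step 2a : antisymmetrization
----------------------------------------------------------------

def flipFun {n : ℕ} (V : Finset (Fin n)) : (Fin n ⊕ Fin n) → (Fin n ⊕ Fin n) :=
  Sum.elim (fun i => if i ∈ V then Sum.inr i else Sum.inl i)
    (fun i => if i ∈ V then Sum.inl i else Sum.inr i)

lemma flipFun_involutive {n : ℕ} (V : Finset (Fin n)) : Function.Involutive (flipFun V) := by
  rintro (i | i) <;> simp only [flipFun, Sum.elim_inl, Sum.elim_inr] <;>
    by_cases h : i ∈ V <;> simp [h]

def flipPerm {n : ℕ} (V : Finset (Fin n)) : Equiv.Perm (Fin n ⊕ Fin n) :=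
  (flipFun_involutive V).toPerm

@[simp] lemma flipPerm_inl {n : ℕ} (V : Finset (Fin n)) (i : Fin n) :
    flipPerm V (Sum.inl i) = if i ∈ V then Sum.inr i else Sum.inl i := rfl

@[simp] lemma flipPerm_inr {n : ℕ} (V : Finset (Fin n)) (i : Fin n) :
    flipPerm V (Sum.inr i) = if i ∈ V then Sum.inl i else Sum.inr i := rfl

lemma flipPerm_insert {n : ℕ} {V : Finset (Fin n)} {a : Fin n} (ha : a ∉ V) :
    flipPerm (insert a V) = Equiv.swap (Sum.inl a) (Sum.inr a) * flipPerm V := by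
  apply Equiv.ext
  rintro (i | i) <;> by_cases h : i = a
  · subst h
    simp [Equiv.Perm.mul_apply, ha, Equiv.swap_apply_left]
  · have h1 : (Sum.inl i : Fin n ⊕ Fin n) ≠ Sum.inl a := by simp [h]
    have h2 : (Sum.inl i : Fin n ⊕ Fin n) ≠ Sum.inr a := by simp
    have h3 : (Sum.inr i : Fin n ⊕ Fin n) ≠ Sum.inl a := by simp
    have h4 : (Sum.inr i : Fin n ⊕ Fin n) ≠ Sum.inr a := by simp [h]
    by_cases hv : i ∈ V <;>
      simp [Equiv.Perm.mul_apply, Finset.mem_insert, h, hv,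
        Equiv.swap_apply_of_ne_of_ne, h1, h2, h3, h4]
  · subst h
    simp [Equiv.Perm.mul_apply, ha, Equiv.swap_apply_right]
  · have h1 : (Sum.inl i : Fin n ⊕ Fin n) ≠ Sum.inl a := by simp [h]
    have h2 : (Sum.inl i : Fin n ⊕ Fin n) ≠ Sum.inr a := by simp
    have h3 : (Sum.inr i : Fin n ⊕ Fin n) ≠ Sum.inl a := by simp
    have h4 : (Sum.inr i : Fin n ⊕ Fin n) ≠ Sum.inr a := by simp [h]
    by_cases hv : i ∈ V <;>
      simp [Equiv.Perm.mul_apply, Finset.mem_insert, h, hv,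
        Equiv.swap_apply_of_ne_of_ne, h1, h2, h3, h4]

lemma sign_flipPerm {n : ℕ} (V : Finset (Fin n)) :
    Equiv.Perm.sign (flipPerm V) = (-1) ^ V.card := by
  classical
  induction V using Finset.induction_on with
  | empty =>
      have : flipPerm (∅ : Finset (Fin n)) = 1 := by
        apply Equiv.ext
        rintro (i | i) <;> simp
      rw [this]
      simp
  | @insert a V ha ih =>
      rw [flipPerm_insert ha, Equiv.Perm.sign_mul, ih, Equiv.Perm.sign_swap (by simp),
        Finset.card_insert_of_notMem ha, pow_succ]
      rw [mul_comm]

/-- the pair-flipping permutation: flips pairs with indices NOT in `T`. -/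
def tauPerm {n : ℕ} (T : Finset (Fin n)) : Equiv.Perm (Fin (2 * n)) :=
  (QQ n).permCongr (flipPerm Tᶜ)

lemma tauPerm_ee_mem {n : ℕ} {T : Finset (Fin n)} {i : Fin n} (h : i ∈ T) :
    tauPerm T (ee i) = ee i := by
  rw [tauPerm, Equiv.permCongr_apply, QQ_symm_ee, flipPerm_inl, if_neg (by simp [h])]
  rfl

lemma tauPerm_oo_mem {n : ℕ} {T : Finset (Fin n)} {i : Fin n} (h : i ∈ T) :
    tauPerm T (oo i) = oo i := by
  rw [tauPerm, Equiv.permCongr_apply, QQ_symm_oo, flipPerm_inr, if_neg (by simp [h])]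
  rfl

lemma tauPerm_ee_not_mem {n : ℕ} {T : Finset (Fin n)} {i : Fin n} (h : i ∉ T) :
    tauPerm T (ee i) = oo i := by
  rw [tauPerm, Equiv.permCongr_apply, QQ_symm_ee, flipPerm_inl, if_pos (Finset.mem_compl.2 h)]
  rfl

lemma tauPerm_oo_not_mem {n : ℕ} {T : Finset (Fin n)} {i : Fin n} (h : i ∉ T) :
    tauPerm T (oo i) = ee i := by
  rw [tauPerm, Equiv.permCongr_apply, QQ_symm_oo, flipPerm_inr, if_pos (Finset.mem_compl.2 h)]
  rfl

lemma sign_tauPerm {n : ℕ} (T : Finset (Fin n)) :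
    Equiv.Perm.sign (tauPerm T) = (-1) ^ (n - T.card) := by
  rw [tauPerm, Equiv.Perm.sign_permCongr, sign_flipPerm, Finset.card_compl,
    Fintype.card_fin]

lemma antisym_sum {n : ℕ} (B : Matrix (Fin (2 * n)) (Fin (2 * n)) ℝ) :
    ∑ σ : Equiv.Perm (Fin (2 * n)), ((Equiv.Perm.sign σ : ℤ) : ℝ) *
        ∏ i : Fin n, (B - Bᵀ) (σ (ee i)) (σ (oo i))
      = 2 ^ n * ∑ σ : Equiv.Perm (Fin (2 * n)), ((Equiv.Perm.sign σ : ℤ) : ℝ) *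
        ∏ i : Fin n, B (σ (ee i)) (σ (oo i)) := by
  classical
  have hprod : ∀ σ : Equiv.Perm (Fin (2 * n)),
      ∏ i : Fin n, (B - Bᵀ) (σ (ee i)) (σ (oo i))
      = ∑ T ∈ (univ : Finset (Fin n)).powerset,
          (∏ i ∈ T, B (σ (ee i)) (σ (oo i))) *
            ∏ i ∈ univ \ T, -(B (σ (oo i)) (σ (ee i))) := by
    intro σ
    rw [← Finset.prod_add]
    apply Finset.prod_congr rfl
    intro i _
    simp [Matrix.sub_apply, sub_eq_add_neg]
  simp_rw [hprod, Finset.mul_sum]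
  rw [Finset.sum_comm]
  have hT : ∀ T ∈ (univ : Finset (Fin n)).powerset,
      (∑ σ : Equiv.Perm (Fin (2 * n)), ((Equiv.Perm.sign σ : ℤ) : ℝ) *
        ((∏ i ∈ T, B (σ (ee i)) (σ (oo i))) *
          ∏ i ∈ univ \ T, -(B (σ (oo i)) (σ (ee i)))))
      = ∑ σ : Equiv.Perm (Fin (2 * n)), ((Equiv.Perm.sign σ : ℤ) : ℝ) *
          ∏ i : Fin n, B (σ (ee i)) (σ (oo i)) := by
    intro T _
    rw [← Fintype.sum_bijective (fun σ : Equiv.Perm (Fin (2 * n)) => σ * tauPerm T)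
      (Group.mulRight_bijective (tauPerm T))
      (fun σ => ((Equiv.Perm.sign (σ * tauPerm T) : ℤ) : ℝ) *
        ((∏ i ∈ T, B ((σ * tauPerm T) (ee i)) ((σ * tauPerm T) (oo i))) *
          ∏ i ∈ univ \ T, -(B ((σ * tauPerm T) (oo i)) ((σ * tauPerm T) (ee i)))))
      _ (fun σ => rfl)]
    apply Finset.sum_congr rfl
    intro σ _
    have h1 : ∏ i ∈ T, B ((σ * tauPerm T) (ee i)) ((σ * tauPerm T) (oo i))
        = ∏ i ∈ T, B (σ (ee i)) (σ (oo i)) := by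
      apply Finset.prod_congr rfl
      intro i hi
      rw [Finset.mem_powerset] at *
      simp [Equiv.Perm.mul_apply, tauPerm_ee_mem hi, tauPerm_oo_mem hi]
    have h2 : ∏ i ∈ univ \ T, -(B ((σ * tauPerm T) (oo i)) ((σ * tauPerm T) (ee i)))
        = (-1 : ℝ) ^ (n - T.card) * ∏ i ∈ univ \ T, B (σ (ee i)) (σ (oo i)) := by
      have : ∀ i ∈ univ \ T, -(B ((σ * tauPerm T) (oo i)) ((σ * tauPerm T) (ee i)))
          = (-1) * B (σ (ee i)) (σ (oo i)) := by
        intro i hi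
        rw [Finset.mem_sdiff] at hi
        simp [Equiv.Perm.mul_apply, tauPerm_ee_not_mem hi.2, tauPerm_oo_not_mem hi.2]
      rw [Finset.prod_congr rfl this, Finset.prod_mul_distrib, Finset.prod_const,
        Finset.card_sdiff_of_subset (Finset.subset_univ T), Finset.card_univ, Fintype.card_fin]
    have h3 : ((Equiv.Perm.sign (σ * tauPerm T) : ℤ) : ℝ)
        = ((Equiv.Perm.sign σ : ℤ) : ℝ) * (-1) ^ (n - T.card) := by
      rw [Equiv.Perm.sign_mul, sign_tauPerm]
      push_cast
      ring
    rw [h1, h2, h3]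
    have h4 : (∏ i ∈ T, B (σ (ee i)) (σ (oo i))) *
        ∏ i ∈ univ \ T, B (σ (ee i)) (σ (oo i))
        = ∏ i : Fin n, B (σ (ee i)) (σ (oo i)) := by
      rw [← Finset.compl_eq_univ_sdiff]
      exact Finset.prod_mul_prod_compl T _
    have h5 : ((-1 : ℝ)) ^ (n - T.card) * (-1) ^ (n - T.card) = 1 := by
      rw [← pow_add]
      exact Even.neg_one_pow ⟨n - T.card, by omega⟩
    calc ((Equiv.Perm.sign σ : ℤ) : ℝ) * (-1) ^ (n - T.card) *
          ((∏ i ∈ T, B (σ (ee i)) (σ (oo i))) *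
            ((-1) ^ (n - T.card) * ∏ i ∈ univ \ T, B (σ (ee i)) (σ (oo i))))
        = ((Equiv.Perm.sign σ : ℤ) : ℝ) *
            (((-1 : ℝ)) ^ (n - T.card) * (-1) ^ (n - T.card)) *
            ((∏ i ∈ T, B (σ (ee i)) (σ (oo i))) *
              ∏ i ∈ univ \ T, B (σ (ee i)) (σ (oo i))) := by ring
      _ = ((Equiv.Perm.sign σ : ℤ) : ℝ) * ∏ i : Fin n, B (σ (ee i)) (σ (oo i)) := by
          rw [h4, h5, mul_one]
  rw [Finset.sum_congr rfl hT, Finset.sum_const, Finset.card_powerset,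
    Finset.card_univ, Fintype.card_fin, nsmul_eq_mul, ← Finset.mul_sum]
  push_cast
  ring


----------------------------------------------------------------
-- the core identity
----------------------------------------------------------------

lemma core {n : ℕ} (B : Matrix (Fin (2 * n)) (Fin (2 * n)) ℝ) :
    ∑ R ∈ ((univ : Finset (Fin (2 * n))).powersetCard n).attach,
      ((-1 : ℝ) ^ (n + ∑ i ∈ R.1, ((i : ℕ) + 1)) *
        (B.submatrix (aMap R.1 (Finset.mem_powersetCard_univ.mp R.2))
          (bMap R.1 (Finset.mem_powersetCard_univ.mp R.2))).det)
    = pfaffian (B - Bᵀ) := by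
  have hpf : pfaffian (B - Bᵀ) = (1 / ((2 : ℝ) ^ n * n.factorial)) *
      ∑ σ : Equiv.Perm (Fin (2 * n)), ((Equiv.Perm.sign σ : ℤ) : ℝ) *
        ∏ i : Fin n, (B - Bᵀ) (σ (ee i)) (σ (oo i)) := rfl
  rw [hpf, antisym_sum, sum_perm, ← Finset.mul_sum]
  have hfac : (n.factorial : ℝ) ≠ 0 := Nat.cast_ne_zero.2 n.factorial_ne_zero
  have h2n : ((2 : ℝ) ^ n) ≠ 0 := by positivity
  rw [show (1 / ((2 : ℝ) ^ n * n.factorial)) * (2 ^ n * ((n.factorial : ℝ) *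
      ∑ R ∈ ((univ : Finset (Fin (2 * n))).powersetCard n).attach,
        (-1 : ℝ) ^ (∑ r ∈ R.1, (r : ℕ)) *
          (B.submatrix (aMap R.1 (Finset.mem_powersetCard_univ.mp R.2))
            (bMap R.1 (Finset.mem_powersetCard_univ.mp R.2))).det))
      = ∑ R ∈ ((univ : Finset (Fin (2 * n))).powersetCard n).attach,
        (-1 : ℝ) ^ (∑ r ∈ R.1, (r : ℕ)) *
          (B.submatrix (aMap R.1 (Finset.mem_powersetCard_univ.mp R.2))
            (bMap R.1 (Finset.mem_powersetCard_univ.mp R.2))).det by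
    field_simp]
  apply Finset.sum_congr rfl
  intro R _
  have hR : R.1.card = n := Finset.mem_powersetCard_univ.mp R.2
  congr 1
  apply neg_one_pow_eq_of_mod_two
  have : ∑ i ∈ R.1, ((i : ℕ) + 1) = (∑ i ∈ R.1, (i : ℕ)) + n := by
    rw [Finset.sum_add_distrib, Finset.sum_const, hR, smul_eq_mul, mul_one]
  omega

lemma zpow_sum₀ {x : ℝ} (hx : x ≠ 0) {ι : Type*} (s : Finset ι) (f : ι → ℤ) :
    x ^ (∑ i ∈ s, f i) = ∏ i ∈ s, x ^ f i := by
  classical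
  induction s using Finset.induction_on with
  | empty => simp
  | @insert a s ha ih => rw [Finset.sum_insert ha, Finset.prod_insert ha, zpow_add₀ hx, ih]

end Stmt10Aux


open Stmt10Aux

/-- Let `A` be a `2n × 2n` real matrix, `x ≠ 0`, and `X, Y ⊆ {1, …, 2n}` disjoint.
Define `Ã` by `Ã_{i,j} = A_{i,j} · x^{1_{i∈X} + 1_{j∈Y} − 1_{i∈Y} − 1_{j∈X}}`.  Then
`∑_R (−1)^{n + ΣR} x^{2(|R∩X| − |R∩Y|)} det A_R^S = x^{|X|−|Y|} pf(Ã − Ãᵗ)`, where `R`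
runs over the size-`n` subsets of `{1, …, 2n}`, `S` is the complement of `R`, both
sorted increasingly, `A_R^S` is the submatrix with rows `R` and columns `S`, and `ΣR`
is the sum of the (1-based) labels of the elements of `R`. -/
theorem stmt_10 {n : ℕ} (A : Matrix (Fin (2 * n)) (Fin (2 * n)) ℝ)
    (x : ℝ) (hx : x ≠ 0) (X Y : Finset (Fin (2 * n))) (hXY : Disjoint X Y) :
    ∑ R ∈ ((Finset.univ : Finset (Fin (2 * n))).powersetCard n).attach,
      ((-1 : ℝ) ^ (n + ∑ i ∈ R.1, ((i : ℕ) + 1)) *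
        x ^ (2 * (((R.1 ∩ X).card : ℤ) - ((R.1 ∩ Y).card : ℤ))) *
        (A.submatrix
          (fun a : Fin n =>
            ((R.1.orderIsoOfFin (Finset.mem_powersetCard_univ.mp R.2)) a : Fin (2 * n)))
          (fun b : Fin n =>
            (((R.1ᶜ).orderIsoOfFin
              (by rw [Finset.card_compl, Finset.mem_powersetCard_univ.mp R.2,
                  Fintype.card_fin]; omega)) b : Fin (2 * n)))).det)
      = x ^ ((X.card : ℤ) - (Y.card : ℤ)) *
          pfaffian ((Matrix.of fun i j => A i j *
              x ^ (((if i ∈ X then 1 else 0) + (if j ∈ Y then 1 else 0)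
                - (if i ∈ Y then 1 else 0) - (if j ∈ X then 1 else 0) : ℤ)))
            - (Matrix.of fun i j => A i j *
              x ^ (((if i ∈ X then 1 else 0) + (if j ∈ Y then 1 else 0)
                - (if i ∈ Y then 1 else 0) - (if j ∈ X then 1 else 0) : ℤ)))ᵀ) := by
  classical
  set f : Fin (2 * n) → ℤ :=
    fun i => (if i ∈ X then 1 else 0) - (if i ∈ Y then 1 else 0) with hf
  set Atil : Matrix (Fin (2 * n)) (Fin (2 * n)) ℝ :=
    Matrix.of fun i j => A i j *
      x ^ (((if i ∈ X then 1 else 0) + (if j ∈ Y then 1 else 0)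
        - (if i ∈ Y then 1 else 0) - (if j ∈ X then 1 else 0) : ℤ)) with hAtil
  have hsplit : ∀ T : Finset (Fin (2 * n)),
      ∑ r ∈ T, f r = ((T ∩ X).card : ℤ) - ((T ∩ Y).card : ℤ) := by
    intro T
    rw [hf]
    rw [Finset.sum_sub_distrib, Finset.sum_boole, Finset.sum_boole,
      Finset.filter_mem_eq_inter, Finset.filter_mem_eq_inter]
  have hunivf : ∑ r : Fin (2 * n), f r = ((X.card : ℤ) - (Y.card : ℤ)) := by
    rw [hsplit Finset.univ, Finset.univ_inter, Finset.univ_inter]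
  rw [← Stmt10Aux.core Atil, Finset.mul_sum]
  apply Finset.sum_congr rfl
  intro R _
  have hR : R.1.card = n := Finset.mem_powersetCard_univ.mp R.2
  -- the determinant factorization
  have hsub : Atil.submatrix (aMap R.1 hR) (bMap R.1 hR)
      = (Matrix.diagonal (fun i => x ^ f (aMap R.1 hR i))) *
          (A.submatrix (aMap R.1 hR) (bMap R.1 hR)) *
          Matrix.diagonal (fun j => x ^ (- f (bMap R.1 hR j))) := by
    ext i j
    rw [Matrix.mul_diagonal, Matrix.diagonal_mul, Matrix.submatrix_apply,
      Matrix.submatrix_apply, hAtil, Matrix.of_apply]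
    rw [show ((if aMap R.1 hR i ∈ X then 1 else 0) + (if bMap R.1 hR j ∈ Y then 1 else 0)
        - (if aMap R.1 hR i ∈ Y then 1 else 0) - (if bMap R.1 hR j ∈ X then 1 else 0) : ℤ)
        = f (aMap R.1 hR i) + (- f (bMap R.1 hR j)) by rw [hf]; ring]
    rw [zpow_add₀ hx]
    ring
  have hprodA : ∏ i : Fin n, x ^ f (aMap R.1 hR i) = x ^ (∑ r ∈ R.1, f r) := by
    rw [zpow_sum₀ hx]
    exact prod_orderIsoOfFin R.1 hR (fun r => x ^ f r)
  have hprodB : ∏ j : Fin n, x ^ (- f (bMap R.1 hR j)) = x ^ (- ∑ s ∈ R.1ᶜ, f s) := by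
    rw [show (- ∑ s ∈ R.1ᶜ, f s) = ∑ s ∈ R.1ᶜ, (- f s) by rw [Finset.sum_neg_distrib],
      zpow_sum₀ hx]
    exact prod_orderIsoOfFin R.1ᶜ (compl_card hR) (fun s => x ^ (- f s))
  have hcompl : ∑ s ∈ R.1ᶜ, f s = ((X.card : ℤ) - (Y.card : ℤ)) - ∑ r ∈ R.1, f r := by
    have := Finset.sum_add_sum_compl R.1 f
    rw [hunivf] at this
    omega
  have hdet : (Atil.submatrix (aMap R.1 hR) (bMap R.1 hR)).det
      = x ^ (∑ r ∈ R.1, f r) * (A.submatrix (aMap R.1 hR) (bMap R.1 hR)).det *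
          x ^ (- ((X.card : ℤ) - (Y.card : ℤ)) + ∑ r ∈ R.1, f r) := by
    rw [hsub, Matrix.det_mul, Matrix.det_mul, Matrix.det_diagonal, Matrix.det_diagonal,
      hprodA, hprodB, hcompl]
    rw [show -(((X.card : ℤ) - (Y.card : ℤ)) - ∑ r ∈ R.1, f r)
      = - ((X.card : ℤ) - (Y.card : ℤ)) + ∑ r ∈ R.1, f r by ring]
  show (-1 : ℝ) ^ (n + ∑ i ∈ R.1, ((i : ℕ) + 1)) *
      x ^ (2 * (((R.1 ∩ X).card : ℤ) - ((R.1 ∩ Y).card : ℤ))) *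
      (A.submatrix (aMap R.1 hR) (bMap R.1 hR)).det
    = x ^ ((X.card : ℤ) - (Y.card : ℤ)) *
        ((-1 : ℝ) ^ (n + ∑ i ∈ R.1, ((i : ℕ) + 1)) *
          (Atil.submatrix (aMap R.1 hR) (bMap R.1 hR)).det)
  rw [hdet, ← hsplit R.1]
  rw [show x ^ (2 * (∑ r ∈ R.1, f r)) = x ^ ((X.card : ℤ) - (Y.card : ℤ)) *
      (x ^ (∑ r ∈ R.1, f r) *
        x ^ (- ((X.card : ℤ) - (Y.card : ℤ)) + ∑ r ∈ R.1, f r)) by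
    rw [← zpow_add₀ hx, ← zpow_add₀ hx]
    congr 1
    ring]
  ring
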